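/- For every real z > 0 and every h ∈ (0,1): 1 - (1-h²)/(2h²(z+1)) ≤ h·(1 - F_{z-1}(h)) / (c_z · (1-h²)^z) ≤ 1. -/

import Mathlib

open Real intervalIntegral MeasureTheory Set

lemma rpow_fact {z s : ℝ} (h1 : -1 ≤ s) (h2 : s ≤ 1) :
    (1 + s) ^ (z-1) * (1 - s) ^ (z-1) = (1 - s^2) ^ (z-1) := by
  rw [← Real.mul_rpow (by linarith) (by linarith)]
  ring_nf

lemma integ_main {z : ℝ} (hz : 0 < z) (a b : ℝ) (ha : a ∈ Set.Icc (-1:ℝ) 1)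
    (hb : b ∈ Set.Icc (-1:ℝ) 1) :
    IntervalIntegrable (fun s : ℝ => (1 - s^2) ^ (z-1)) volume a b := by
  have H01 : IntervalIntegrable (fun s : ℝ => (1 - s^2) ^ (z-1)) volume 0 1 := by
    have h1 : IntervalIntegrable (fun s : ℝ => (1 - s) ^ (z-1)) volume 0 1 := by
      have := (intervalIntegrable_rpow' (a := 1) (b := 0) (by linarith : (-1:ℝ) < z - 1)).comp_sub_left 1
      simpa using this
    have h2 : IntervalIntegrable (fun s : ℝ => (1 + s) ^ (z-1) * (1 - s) ^ (z-1)) volume 0 1 :=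
      h1.continuousOn_mul (by
        apply ContinuousOn.rpow_const
        · fun_prop
        · intro x hx
          rw [Set.uIcc_of_le (by norm_num : (0:ℝ) ≤ 1)] at hx
          left; nlinarith [hx.1])
    apply h2.congr
    intro s hs
    rw [Set.uIoc_of_le (by norm_num : (0:ℝ) ≤ 1)] at hs
    exact rpow_fact (by linarith [hs.1]) hs.2
  have Hm0 : IntervalIntegrable (fun s : ℝ => (1 - s^2) ^ (z-1)) volume (-1) 0 := by
    have := (IntervalIntegrable.iff_comp_neg (f := fun s : ℝ => (1 - s^2) ^ (z-1))).mp H01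
    simp only [neg_zero, neg_sq] at this
    exact this.symm
  have Hfull := Hm0.trans H01
  exact Hfull.mono_set (by
    rw [Set.uIcc_of_le (by norm_num : (-1:ℝ) ≤ 1)]
    exact Set.uIcc_subset_Icc ha hb)

lemma ftc_a {w : ℝ} (hw : 0 < w) {h : ℝ} (h0 : 0 < h) (h1 : h < 1) :
    ∫ s in h..1, s * (1 - s^2) ^ (w-1) = (1 - h^2) ^ w / (2 * w) := by
  have hcont : ContinuousOn (fun s : ℝ => -((1 - s^2) ^ w) / (2 * w)) (Set.Icc h 1) := by
    apply ContinuousOn.div_const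
    apply ContinuousOn.neg
    apply ContinuousOn.rpow_const (by fun_prop)
    exact fun x _ => Or.inr hw.le
  have hint : IntervalIntegrable (fun s : ℝ => s * (1 - s^2) ^ (w-1)) volume h 1 :=
    (integ_main hw h 1 ⟨by linarith, h1.le⟩ ⟨by norm_num, le_rfl⟩).continuousOn_mul
      continuous_id.continuousOn
  have hderiv : ∀ x ∈ Set.Ioo h 1, HasDerivWithinAt
      (fun s : ℝ => -((1 - s^2) ^ w) / (2 * w)) (x * (1 - x^2) ^ (w-1)) (Set.Ioi x) x := by
    intro x hx
    have hb : (0:ℝ) < 1 - x^2 := by nlinarith [hx.1, hx.2, h0]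
    have hd : HasDerivAt (fun s : ℝ => 1 - s^2) (-(2*x)) x := by
      simpa using ((hasDerivAt_pow 2 x).const_sub 1)
    have hD : HasDerivAt (fun s : ℝ => -((1 - s^2) ^ w) / (2 * w))
        (x * (1 - x^2) ^ (w-1)) x := by
      have := ((hd.rpow_const (p := w) (Or.inl hb.ne')).neg).div_const (2 * w)
      convert this using 1
      · rfl
      · rfl
      · rfl
      have hw' : w ≠ 0 := hw.ne'
      field_simp
    exact hD.hasDerivWithinAt
  rw [intervalIntegral.integral_eq_sub_of_hasDeriv_right_of_le h1.le hcont hderiv hint]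
  have : ((1:ℝ) - 1^2) ^ w = 0 := by
    norm_num
    exact Real.zero_rpow hw.ne'
  rw [this]
  ring

lemma ftc_c {z : ℝ} (hz : 0 < z) {h : ℝ} (h0 : 0 < h) (h1 : h < 1) :
    ∫ s in h..1, ((1 - s^2) ^ (z-1) + (1 - s^2) ^ z / (2 * z * s^2))
      = (1 - h^2) ^ z / (2 * z * h) := by
  have hcont : ContinuousOn (fun s : ℝ => -((1 - s^2) ^ z) / (2 * z * s)) (Set.Icc h 1) := by
    apply ContinuousOn.div
    · apply ContinuousOn.neg
      apply ContinuousOn.rpow_const (by fun_prop)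
      exact fun x _ => Or.inr hz.le
    · fun_prop
    · intro x hx
      have : 0 < x := lt_of_lt_of_le h0 hx.1
      positivity
  have hcont2 : ContinuousOn (fun s : ℝ => (1 - s^2) ^ z / (2 * z * s^2)) (Set.Icc h 1) := by
    apply ContinuousOn.div
    · apply ContinuousOn.rpow_const (by fun_prop)
      exact fun x _ => Or.inr hz.le
    · fun_prop
    · intro x hx
      have : 0 < x := lt_of_lt_of_le h0 hx.1
      positivity
  have hint : IntervalIntegrable
      (fun s : ℝ => (1 - s^2) ^ (z-1) + (1 - s^2) ^ z / (2 * z * s^2)) volume h 1 := by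
    apply IntervalIntegrable.add
    · exact integ_main hz h 1 ⟨by linarith, h1.le⟩ ⟨by norm_num, le_rfl⟩
    · exact (hcont2.mono (by rw [Set.uIcc_of_le h1.le])).intervalIntegrable
  have hderiv : ∀ x ∈ Set.Ioo h 1, HasDerivWithinAt
      (fun s : ℝ => -((1 - s^2) ^ z) / (2 * z * s))
      ((1 - x^2) ^ (z-1) + (1 - x^2) ^ z / (2 * z * x^2)) (Set.Ioi x) x := by
    intro x hx
    have hxpos : 0 < x := h0.trans hx.1
    have hb : (0:ℝ) < 1 - x^2 := by nlinarith [hx.1, hx.2]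
    have hd : HasDerivAt (fun s : ℝ => 1 - s^2) (-(2*x)) x := by
      simpa using ((hasDerivAt_pow 2 x).const_sub 1)
    have hnum : HasDerivAt (fun s : ℝ => -((1 - s^2) ^ z))
        (-(-(2*x) * z * (1 - x^2) ^ (z-1))) x := (hd.rpow_const (p := z) (Or.inl hb.ne')).neg
    have hden : HasDerivAt (fun s : ℝ => 2 * z * s) (2 * z) x := by
      simpa using (hasDerivAt_id x).const_mul (2*z)
    have hD := hnum.div hden (by positivity)
    have key : (1 - x^2) ^ z = (1 - x^2) ^ (z-1) * (1 - x^2) := by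
      rw [← Real.rpow_add_one hb.ne']
      ring_nf
    refine (HasDerivAt.hasDerivWithinAt ?_)
    convert hD using 1
    · rfl
    · rfl
    rw [key]
    field_simp
    ring
  rw [intervalIntegral.integral_eq_sub_of_hasDeriv_right_of_le h1.le hcont hderiv hint]
  have : ((1:ℝ) - 1^2) ^ z = 0 := by
    norm_num
    exact Real.zero_rpow hz.ne'
  rw [this]
  field_simp
  ring

lemma beta_real {z : ℝ} (hz : 0 < z) :
    ∫ x in (0:ℝ)..1, x ^ (z-1) * (1-x) ^ (z-1)
      = Real.Gamma z ^ 2 / Real.Gamma (2*z) := by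
  have hB : ((∫ x in (0:ℝ)..1, x ^ (z-1) * (1-x) ^ (z-1) : ℝ) : ℂ)
      = Complex.betaIntegral z z := by
    rw [← intervalIntegral.integral_ofReal, Complex.betaIntegral]
    apply intervalIntegral.integral_congr
    intro x hx
    rw [Set.uIcc_of_le (by norm_num : (0:ℝ) ≤ 1)] at hx
    push_cast
    rw [show (z:ℂ) - 1 = ((z - 1 : ℝ) : ℂ) by push_cast; ring,
      show (1:ℂ) - (x:ℂ) = ((1 - x : ℝ) : ℂ) by push_cast; ring,
      ← Complex.ofReal_cpow hx.1, ← Complex.ofReal_cpow (by linarith [hx.2])]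
  have hgam := Complex.Gamma_mul_Gamma_eq_betaIntegral
    (s := (z:ℂ)) (t := (z:ℂ)) (by simpa using hz) (by simpa using hz)
  rw [← hB] at hgam
  have h2 : ((z:ℂ) + z) = ((2*z : ℝ) : ℂ) := by push_cast; ring
  rw [h2, Complex.Gamma_ofReal, Complex.Gamma_ofReal] at hgam
  have hgam' : Real.Gamma z * Real.Gamma z
      = Real.Gamma (2*z) * ∫ x in (0:ℝ)..1, x ^ (z-1) * (1-x) ^ (z-1) := by
    exact_mod_cast hgam
  have hpos : 0 < Real.Gamma (2*z) := Real.Gamma_pos_of_pos (by linarith)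
  field_simp
  rw [mul_comm z 2]
  nlinarith [hgam']

lemma norm_int {z : ℝ} (hz : 0 < z) :
    ∫ s in (-1:ℝ)..1, (1 - s^2) ^ (z-1)
      = Real.sqrt π * Real.Gamma z / Real.Gamma (z + 1/2) := by
  have step1 : ∫ s in (-1:ℝ)..1, (1 - s^2) ^ (z-1)
      = 2 * ∫ x in (0:ℝ)..1, (1 - (2*x + -1)^2) ^ (z-1) := by
    have := intervalIntegral.integral_comp_mul_add
      (f := fun s : ℝ => (1 - s^2) ^ (z-1)) (a := 0) (b := 1)
      (c := 2) (by norm_num) (-1)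
    rw [smul_eq_mul] at this
    norm_num at this
    linarith
  have step2 : (∫ x in (0:ℝ)..1, (1 - (2*x + -1)^2) ^ (z-1))
      = (4:ℝ) ^ (z-1) * ∫ x in (0:ℝ)..1, x ^ (z-1) * (1-x) ^ (z-1) := by
    rw [← intervalIntegral.integral_const_mul]
    apply intervalIntegral.integral_congr
    intro x hx
    rw [Set.uIcc_of_le (by norm_num : (0:ℝ) ≤ 1)] at hx
    show (1 - (2*x + -1)^2) ^ (z-1) = 4 ^ (z-1) * (x ^ (z-1) * (1-x) ^ (z-1))
    have h4 : (1:ℝ) - (2*x + -1)^2 = 4 * (x * (1-x)) := by ring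
    rw [h4, Real.mul_rpow (by norm_num) (by nlinarith [hx.1, hx.2]),
      Real.mul_rpow hx.1 (by linarith [hx.2])]
  have hbeta := beta_real hz
  have hdup := Real.Gamma_mul_Gamma_add_half z
  have hΓz : 0 < Real.Gamma z := Real.Gamma_pos_of_pos hz
  have hΓh : 0 < Real.Gamma (z + 1/2) := Real.Gamma_pos_of_pos (by linarith)
  have hΓ2 : 0 < Real.Gamma (2*z) := Real.Gamma_pos_of_pos (by linarith)
  have hsp : 0 < Real.sqrt π := Real.sqrt_pos.mpr Real.pi_pos
  have ht : (0:ℝ) < 2 ^ (1 - 2*z) := Real.rpow_pos_of_pos two_pos _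
  have h42 : (4:ℝ) = (2:ℝ) ^ (2:ℝ) := by
    rw [show ((2:ℝ)) = ((2:ℕ):ℝ) from by norm_num, Real.rpow_natCast]
    norm_num
  have hpow : (2:ℝ) * (4:ℝ) ^ (z-1) * (2:ℝ) ^ (1 - 2*z) = 1 := by
    have e1 : (4:ℝ) ^ (z-1) = (2:ℝ) ^ ((2:ℝ)*(z-1)) := by
      rw [h42, ← Real.rpow_mul (by norm_num : (0:ℝ) ≤ 2)]
    rw [e1, show (2:ℝ) * (2:ℝ)^((2:ℝ)*(z-1)) * 2^(1-2*z)
        = 2^(1:ℝ) * 2^((2:ℝ)*(z-1)) * 2^(1-2*z) from by rw [Real.rpow_one],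
      ← Real.rpow_add two_pos, ← Real.rpow_add two_pos,
      show (1:ℝ) + 2*(z-1) + (1-2*z) = 0 from by ring, Real.rpow_zero]
  have hΓ2eq : Real.Gamma (2*z)
      = Real.Gamma z * Real.Gamma (z + 1/2) / (2 ^ (1 - 2*z) * Real.sqrt π) := by
    rw [eq_div_iff (by positivity)]
    linarith [hdup]
  rw [step1, step2, hbeta, hΓ2eq]
  field_simp
  linear_combination hpow

theorem F_ratio_bounds (z h : ℝ) (hz : 0 < z) (hh : h ∈ Set.Ioo (0:ℝ) 1)
    (c : ℝ) (hc : c = Real.Gamma (z + 1/2) / (2 * Real.sqrt π * Real.Gamma (z + 1)))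
    (F : ℝ → ℝ) (hF : ∀ t ∈ Set.Icc (-1:ℝ) 1,
      F t = 2 * z * c * ∫ s in (-1:ℝ)..t, (1 - s^2) ^ (z - 1)) :
    1 - (1 - h^2) / (2 * h^2 * (z + 1)) ≤ h * (1 - F h) / (c * (1 - h^2) ^ z) ∧
    h * (1 - F h) / (c * (1 - h^2) ^ z) ≤ 1 := by
  obtain ⟨h0, h1⟩ := hh
  have hΓh : 0 < Real.Gamma (z + 1/2) := Real.Gamma_pos_of_pos (by linarith)
  have hΓ1 : 0 < Real.Gamma (z + 1) := Real.Gamma_pos_of_pos (by linarith)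
  have hsp : 0 < Real.sqrt π := Real.sqrt_pos.mpr Real.pi_pos
  have hcpos : 0 < c := by rw [hc]; positivity
  have hb : 0 < 1 - h^2 := by nlinarith
  have hP : 0 < (1 - h^2) ^ z := Real.rpow_pos_of_pos hb z
  -- F 1 = 1
  have hF1 : F 1 = 1 := by
    rw [hF 1 ⟨by norm_num, le_rfl⟩, norm_int hz, hc, Real.Gamma_add_one hz.ne']
    field_simp
  -- 1 - F h = 2 z c J
  set J := ∫ s in h..1, (1 - s^2) ^ (z-1) with hJdef
  have hsplit : 1 - F h = 2 * z * c * J := by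
    rw [← hF1, hF 1 ⟨by norm_num, le_rfl⟩, hF h ⟨by linarith, h1.le⟩]
    have hadd := intervalIntegral.integral_add_adjacent_intervals
      (integ_main hz (-1) h ⟨le_rfl, by norm_num⟩ ⟨by linarith, h1.le⟩)
      (integ_main hz h 1 ⟨by linarith, h1.le⟩ ⟨by norm_num, le_rfl⟩)
    rw [← hadd]
    ring
  -- the two auxiliary FTC facts
  have hC := ftc_c hz h0 h1
  have hL := ftc_a (w := z+1) (by linarith) h0 h1
  simp only [add_sub_cancel_right] at hL
  -- integrability of the pieces on [h,1]
  have hcont2 : ContinuousOn (fun s : ℝ => (1 - s^2) ^ z / (2 * z * s^2)) (Set.Icc h 1) := by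
    apply ContinuousOn.div
    · apply ContinuousOn.rpow_const (by fun_prop)
      exact fun x _ => Or.inr hz.le
    · fun_prop
    · intro x hx
      have : 0 < x := lt_of_lt_of_le h0 hx.1
      positivity
  have hint1 : IntervalIntegrable (fun s : ℝ => (1 - s^2) ^ (z-1)) volume h 1 :=
    integ_main hz h 1 ⟨by linarith, h1.le⟩ ⟨by norm_num, le_rfl⟩
  have hint2 : IntervalIntegrable (fun s : ℝ => (1 - s^2) ^ z / (2 * z * s^2)) volume h 1 :=
    (hcont2.mono (by rw [Set.uIcc_of_le h1.le])).intervalIntegrable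
  have hMdef : J + (∫ s in h..1, (1 - s^2) ^ z / (2 * z * s^2))
      = (1 - h^2) ^ z / (2 * z * h) := by
    rw [hJdef, ← intervalIntegral.integral_add hint1 hint2]
    exact hC
  set M := ∫ s in h..1, (1 - s^2) ^ z / (2 * z * s^2) with hMdef'
  -- M ≥ 0
  have hM0 : 0 ≤ M := by
    apply intervalIntegral.integral_nonneg h1.le
    intro s hs
    have hs2 : (0:ℝ) ≤ 1 - s^2 := by nlinarith [hs.1, hs.2]
    have : 0 < s := lt_of_lt_of_le h0 hs.1
    positivity
  -- M ≤ (1-h²)^(z+1)/(4 z (z+1) h³)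
  have hMle : M ≤ (1 - h^2) ^ (z+1) / (4 * z * (z+1) * h^3) := by
    have step : M ≤ ∫ s in h..1, s * (1 - s^2) ^ z / (2 * z * h^3) := by
      apply intervalIntegral.integral_mono_on h1.le hint2
      · apply ContinuousOn.intervalIntegrable
        rw [Set.uIcc_of_le h1.le]
        apply ContinuousOn.div_const
        apply ContinuousOn.mul (by fun_prop)
        apply ContinuousOn.rpow_const (by fun_prop)
        exact fun x _ => Or.inr hz.le
      · intro s hs
        have hsp' : 0 < s := lt_of_lt_of_le h0 hs.1
        have hs2 : (0:ℝ) ≤ 1 - s^2 := by nlinarith [hs.1, hs.2]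
        have hrn : (0:ℝ) ≤ (1 - s^2) ^ z := Real.rpow_nonneg hs2 z
        rw [div_le_div_iff₀ (by positivity) (by positivity)]
        have : h^3 ≤ s^3 := pow_le_pow_left₀ h0.le hs.1 3
        nlinarith [mul_le_mul_of_nonneg_left this hrn]
    calc M ≤ ∫ s in h..1, s * (1 - s^2) ^ z / (2 * z * h^3) := step
      _ = (∫ s in h..1, s * (1 - s^2) ^ z) / (2 * z * h^3) := by
          rw [intervalIntegral.integral_div]
      _ = (1 - h^2) ^ (z+1) / (4 * z * (z+1) * h^3) := by
          rw [hL, div_div]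
          ring_nf
  have hJup : J ≤ (1 - h^2) ^ z / (2 * z * h) := by linarith
  have hJlow : (1 - h^2) ^ z / (2 * z * h) - (1 - h^2) ^ (z+1) / (4 * z * (z+1) * h^3) ≤ J := by
    linarith
  have hrad : (1 - h^2) ^ (z+1) = (1 - h^2) ^ z * (1 - h^2) := Real.rpow_add_one hb.ne' z
  rw [hsplit]
  constructor
  · rw [ge_iff_le.symm, ge_iff_le, le_div_iff₀ (by positivity)]
    have key : 2 * z * c * ((1 - h^2) ^ z / (2 * z * h) - (1 - h^2) ^ (z+1) / (4 * z * (z+1) * h^3)) * h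
        = (1 - (1 - h^2) / (2 * h^2 * (z + 1))) * (c * (1 - h^2) ^ z) := by
      rw [hrad]
      field_simp
      ring
    nlinarith [mul_le_mul_of_nonneg_left hJlow (by positivity : (0:ℝ) ≤ 2 * z * c * h)]
  · rw [div_le_one (by positivity)]
    have key : 2 * z * c * ((1 - h^2) ^ z / (2 * z * h)) * h = c * (1 - h^2) ^ z := by
      field_simp
    nlinarith [mul_le_mul_of_nonneg_left hJup (by positivity : (0:ℝ) ≤ 2 * z * c * h)]
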